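/- Let G be a connected bipartite graph with bipartition X ⊔ Y such that (a) the complement G^c has at least one induced cycle of length ≥ 4, and (b) the bipartite complement G^{bc} has no induced cycle of length ≥ 6. Let e = xy be an edge of G and let G' be the graph obtained from G by adding all pairs {u,v} with u ∈ X, v ∈ Y, uy ∈ E(G), xv ∈ E(G). Then the bipartite complement (G')^{bc} has no induced cycle of length ≥ 6. -/

import Mathlib

open SimpleGraph

variable {V : Type*}

/-- `X, Y` form a bipartition of the simple graph `G`: they are disjoint,
cover the vertex set, and are both independent sets. -/
def IsBipartition (G : SimpleGraph V) (X Y : Set V) : Prop :=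
  Disjoint X Y ∧ X ∪ Y = Set.univ ∧
    (∀ u ∈ X, ∀ v ∈ X, ¬ G.Adj u v) ∧ (∀ u ∈ Y, ∀ v ∈ Y, ¬ G.Adj u v)

/-- `c : ZMod n → V` is a cycle of length `n` in `H`: `n` distinct vertices,
consecutive ones (cyclically) adjacent. -/
def IsCycleOn (H : SimpleGraph V) {n : ℕ} (c : ZMod n → V) : Prop :=
  Function.Injective c ∧ ∀ i, H.Adj (c i) (c (i + 1))

/-- An induced (chordless) cycle: the only adjacencies among the cycle
vertices are the cycle edges. -/
def IsInducedCycleOn (H : SimpleGraph V) {n : ℕ} (c : ZMod n → V) : Prop :=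
  IsCycleOn H c ∧ ∀ i j, H.Adj (c i) (c j) → j = i + 1 ∨ i = j + 1

/-- `u` and `v` are even-connected in `G` with respect to the edge list `E`:
there is a walk `p 0, …, p (2k+1)` in `G` from `u` to `v` with `k ≥ 1` whose
matched pairs `p (2l+1) p (2l+2)` all come from `E`, each member of `E` being
used at most its multiplicity in `E`. -/
def EvenConnected [DecidableEq V] (G : SimpleGraph V) (E : List (Sym2 V))
    (u v : V) : Prop :=
  ∃ (k : ℕ) (p : ℕ → V), 1 ≤ k ∧ p 0 = u ∧ p (2 * k + 1) = v ∧
    (∀ r, r ≤ 2 * k → G.Adj (p r) (p (r + 1))) ∧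
    (∀ l, l < k → s(p (2 * l + 1), p (2 * l + 2)) ∈ E) ∧
    (∀ e ∈ E, ((Finset.range k).filter
        (fun l => s(p (2 * l + 1), p (2 * l + 2)) = e)).card ≤ E.count e)

/-- The bipartite complement of `G` with respect to the bipartition `X ⊔ Y`. -/
def bipCompl (G : SimpleGraph V) (X Y : Set V) : SimpleGraph V :=
  SimpleGraph.fromRel (fun a b => a ∈ X ∧ b ∈ Y ∧ ¬ G.Adj a b)

set_option maxHeartbeats 1600000 in
/-- (heart of Theorem 3.8, case `s = 1`) for a connected
bipartite graph `G` with `Gᶜ` containing an induced cycle of length `≥ 4` and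
`G^{bc}` containing no induced cycle of length `≥ 6`, adding the
even-connections with respect to a single edge `e = xy` produces a graph `G'`
whose bipartite complement has no induced cycle of length `≥ 6`. -/
theorem bipCompl_of_colon_ideal_graph_no_long_induced_cycle
    [Fintype V] (G : SimpleGraph V) (X Y : Set V)
    (hbip : IsBipartition G X Y) (hconn : G.Connected)
    (hc4 : ∃ (m : ℕ) (c : ZMod m → V), 4 ≤ m ∧ IsInducedCycleOn Gᶜ c)
    (hbc : ∀ (m : ℕ) (c : ZMod m → V), 6 ≤ m →
      ¬ IsInducedCycleOn (bipCompl G X Y) c)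
    (x y : V) (hx : x ∈ X) (hy : y ∈ Y) (he : G.Adj x y)
    (G' : SimpleGraph V)
    (hG' : G' = SimpleGraph.fromRel
      (fun a b => G.Adj a b ∨ (a ∈ X ∧ b ∈ Y ∧ G.Adj a y ∧ G.Adj x b))) :
    ∀ (m : ℕ) (c : ZMod m → V), 6 ≤ m →
      ¬ IsInducedCycleOn (bipCompl G' X Y) c := by
  classical
  obtain ⟨hdisj, huniv, hXind, hYind⟩ := hbip
  intro m c hm hind
  obtain ⟨⟨hcinj, hcadj⟩, hchord⟩ := hind
  haveI : NeZero m := ⟨by omega⟩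
  -- basic membership facts
  have hmem : ∀ v : V, v ∈ X ∨ v ∈ Y := fun v => by
    have : v ∈ X ∪ Y := by rw [huniv]; trivial
    exact this
  have hnotY : ∀ v ∈ X, v ∉ Y := fun v hv hv' => (Set.disjoint_left.mp hdisj hv) hv'
  have hneXY : ∀ a ∈ X, ∀ b ∈ Y, a ≠ b := fun a ha b hb h => hnotY a ha (h ▸ hb)
  have hYX : ∀ v, v ∈ Y ↔ v ∉ X :=
    fun v => ⟨fun hv hv' => hnotY v hv' hv, fun hv => (hmem v).resolve_left hv⟩
  -- G' adjacency facts
  have hG'le : ∀ a b, G.Adj a b → G'.Adj a b := by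
    intro a b hab; rw [hG', fromRel_adj]; exact ⟨hab.ne, Or.inl (Or.inl hab)⟩
  have hG'XY : ∀ a ∈ X, ∀ b ∈ Y, (G'.Adj a b ↔ G.Adj a b ∨ (G.Adj a y ∧ G.Adj x b)) := by
    intro a ha b hb
    rw [hG', fromRel_adj]
    constructor
    · rintro ⟨-, h | h⟩
      · exact h.imp id (fun h' => ⟨h'.2.2.1, h'.2.2.2⟩)
      · rcases h with h | ⟨hbX, -⟩
        · exact Or.inl h.symm
        · exact absurd hbX (fun h' => hnotY b h' hb)
    · intro h
      exact ⟨hneXY a ha b hb, Or.inl (h.imp id (fun h' => ⟨ha, hb, h'.1, h'.2⟩))⟩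
  -- bipartite complement adjacency facts
  have hBXY : ∀ (H : SimpleGraph V), ∀ a ∈ X, ∀ b ∈ Y,
      ((bipCompl H X Y).Adj a b ↔ ¬ H.Adj a b) := by
    intro H a ha b hb
    rw [bipCompl, fromRel_adj]
    constructor
    · rintro ⟨-, ⟨-, -, h⟩ | ⟨hbX, -, -⟩⟩
      · exact h
      · exact absurd hbX (fun h' => hnotY b h' hb)
    · intro h; exact ⟨hneXY a ha b hb, Or.inl ⟨ha, hb, h⟩⟩
  have hBnoE : ∀ (H : SimpleGraph V) a b, (bipCompl H X Y).Adj a b →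
      (a ∈ X ∧ b ∈ Y ∧ ¬ H.Adj a b) ∨ (b ∈ X ∧ a ∈ Y ∧ ¬ H.Adj b a) := by
    intro H a b hab
    rw [bipCompl, fromRel_adj] at hab
    exact hab.2
  have hBsub : ∀ a b, (bipCompl G' X Y).Adj a b → (bipCompl G X Y).Adj a b := by
    intro a b hab
    rcases hBnoE G' a b hab with ⟨ha, hb, h⟩ | ⟨hb, ha, h⟩
    · exact (hBXY G a ha b hb).mpr (fun h' => h (hG'le _ _ h'))
    · exact ((hBXY G b hb a ha).mpr (fun h' => h (hG'le _ _ h'))).symm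
  have hBXX : ∀ a ∈ X, ∀ b ∈ X, ¬ (bipCompl G X Y).Adj a b := by
    intro a ha b hb hab
    rcases hBnoE G a b hab with ⟨-, h, -⟩ | ⟨-, h, -⟩
    · exact hnotY b hb h
    · exact hnotY a ha h
  have hBYY : ∀ a ∈ Y, ∀ b ∈ Y, ¬ (bipCompl G X Y).Adj a b := by
    intro a ha b hb hab
    rcases hBnoE G a b hab with ⟨h, -, -⟩ | ⟨h, -, -⟩
    · exact hnotY a h ha
    · exact hnotY b h hb
  have hBnG : ∀ a b, (bipCompl G X Y).Adj a b → ¬ G.Adj a b := by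
    intro a b hab
    rcases hBnoE G a b hab with ⟨-, -, h⟩ | ⟨-, -, h⟩
    · exact h
    · exact fun h' => h h'.symm
  -- alternation of the cycle
  have haltX : ∀ i : ZMod m, c i ∈ X ↔ c (i + 1) ∈ Y := by
    intro i
    rcases hBnoE G' _ _ (hcadj i) with ⟨h1, h2, -⟩ | ⟨h1, h2, -⟩
    · exact ⟨fun _ => h2, fun _ => h1⟩
    · exact ⟨fun h => absurd h2 (fun h2 => hnotY _ h h2), fun h => absurd h1 (hnotY _ · h)⟩
  have hEdgeFact : ∀ i j : ZMod m, (bipCompl G' X Y).Adj (c i) (c j) → c i ∈ X → c j ∈ Y →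
      ¬ G.Adj (c i) (c j) ∧ ¬ (G.Adj (c i) y ∧ G.Adj x (c j)) := by
    intro i j hadj hi hj
    have h1 : ¬ G'.Adj (c i) (c j) := (hBXY G' _ hi _ hj).mp hadj
    rw [hG'XY _ hi _ hj] at h1
    push_neg at h1
    exact ⟨h1.1, fun h => h1.2 h.1 h.2⟩
  have hnonc : ∀ i j : ZMod m, c i ∈ X → c j ∈ Y → j ≠ i + 1 → i ≠ j + 1 →
      ¬ G.Adj (c i) (c j) → G.Adj (c i) y ∧ G.Adj x (c j) := by
    intro i j hi hj hj1 hi1 hG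
    have hnb : ¬ (bipCompl G' X Y).Adj (c i) (c j) := fun h => by
      rcases hchord i j h with h | h
      exacts [hj1 h, hi1 h]
    have hG' : G'.Adj (c i) (c j) := by
      by_contra h
      exact hnb ((hBXY G' _ hi _ hj).mpr h)
    rcases (hG'XY _ hi _ hj).mp hG' with h | h
    · exact absurd h hG
    · exact h
  -- parity function along the cycle
  have hpar : ∀ (i : ZMod m) (k : ℕ), (c (i + (k : ZMod m)) ∈ X ↔ (c i ∈ X ↔ Even k)) := by
    intro i k
    induction k with
    | zero => simp
    | succ k ih =>
      have hcast : ((k + 1 : ℕ) : ZMod m) = (k : ZMod m) + 1 := by push_cast; ring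
      rw [hcast, ← add_assoc]
      have h1 := haltX (i + (k : ZMod m))
      have h2 := hYX (c (i + (k : ZMod m) + 1))
      rw [Nat.even_add_one]
      constructor
      · intro h
        have hk : ¬ c (i + (k : ZMod m)) ∈ X := fun h' => (h2.mp (h1.mp h')) h
        rw [ih] at hk
        tauto
      · intro h
        have hk : ¬ c (i + (k : ZMod m)) ∈ X := by rw [ih]; tauto
        by_contra h'
        exact hk (h1.mpr (h2.mpr h'))
  -- case split: does the cycle have a chord in bipCompl G?
  by_cases hA : ∀ i j, (bipCompl G X Y).Adj (c i) (c j) → j = i + 1 ∨ i = j + 1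
  · exact hbc m c hm ⟨⟨hcinj, fun i => hBsub _ _ (hcadj i)⟩, hA⟩
  push_neg at hA
  obtain ⟨i₀, j₀, hadj₀, hne1, hne2⟩ := hA
  obtain ⟨p, q, hpX, hqY, hpqG, hq1, hp1⟩ :
      ∃ p q : ZMod m, c p ∈ X ∧ c q ∈ Y ∧ ¬ G.Adj (c p) (c q) ∧ q ≠ p + 1 ∧ p ≠ q + 1 := by
    rcases hBnoE G _ _ hadj₀ with ⟨h1, h2, h3⟩ | ⟨h1, h2, h3⟩
    · exact ⟨i₀, j₀, h1, h2, h3, hne1, hne2⟩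
    · exact ⟨j₀, i₀, h1, h2, h3, hne2, hne1⟩
  obtain ⟨hpS, hqT⟩ := hnonc p q hpX hqY hq1 hp1 hpqG
  have hprev : ∀ i : ZMod m, (i - 1) + 1 = i := fun i => by ring
  have hYnext : ∀ i : ZMod m, c i ∈ Y → c (i + 1) ∈ X := by
    intro i hi
    by_contra h
    exact hnotY _ ((haltX i).mpr ((hYX _).mpr h)) hi
  have hXprev : ∀ i : ZMod m, c i ∈ Y → c (i - 1) ∈ X := by
    intro i hi
    have h := haltX (i - 1)
    rw [hprev] at h
    exact h.mpr hi
  have hYprev : ∀ i : ZMod m, c i ∈ X → c (i - 1) ∈ Y := by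
    intro i hi
    by_contra h
    have h2 := haltX (i - 1)
    rw [hprev] at h2
    exact hnotY _ hi (h2.mp ((hmem _).resolve_right (fun hh => h hh)))
  have hconsS : ∀ i : ZMod m, c i ∈ X → G.Adj (c i) y →
      ¬ G.Adj x (c (i + 1)) ∧ ¬ G.Adj x (c (i - 1)) := by
    intro i hi hS
    constructor
    · intro hT
      exact (hEdgeFact i (i + 1) (hcadj i) hi ((haltX i).mp hi)).2 ⟨hS, hT⟩
    · intro hT
      have hadj : (bipCompl G' X Y).Adj (c i) (c (i - 1)) := by
        have h := (hcadj (i - 1)).symm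
        rwa [hprev] at h
      exact (hEdgeFact i (i - 1) hadj hi (hYprev i hi)).2 ⟨hS, hT⟩
  have hconsT : ∀ i : ZMod m, c i ∈ Y → G.Adj x (c i) →
      ¬ G.Adj (c (i + 1)) y ∧ ¬ G.Adj (c (i - 1)) y := by
    intro i hi hT
    constructor
    · intro hS
      exact (hEdgeFact (i + 1) i (hcadj i).symm (hYnext i hi) hi).2 ⟨hS, hT⟩
    · intro hS
      have hadj : (bipCompl G' X Y).Adj (c (i - 1)) (c i) := by
        have h := hcadj (i - 1); rwa [hprev] at h
      exact (hEdgeFact (i - 1) i hadj (hXprev i hi) hi).2 ⟨hS, hT⟩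
  have hp1T : ¬ G.Adj x (c (p + 1)) := (hconsS p hpX hpS).1
  have hpm1T : ¬ G.Adj x (c (p - 1)) := (hconsS p hpX hpS).2
  have hp1Y : c (p + 1) ∈ Y := (haltX p).mp hpX
  have hpm1Y : c (p - 1) ∈ Y := hYprev p hpX
  -- m is even
  have hmE : Even m := by
    have h := hpar 0 m
    rw [ZMod.natCast_self, add_zero] at h
    tauto
  obtain ⟨m', hm'⟩ := hmE
  -- representations of Y-positions relative to q
  have hqX : c q ∉ X := (hYX _).mp hqY
  have hrepR : ∀ i : ZMod m, c i ∈ Y → ∃ t : ℕ, t ≤ m' - 1 ∧ i = q + ((2 * t : ℕ) : ZMod m) := by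
    intro i hi
    have hik : i = q + ((i - q).val : ZMod m) := by rw [ZMod.natCast_zmod_val]; ring
    have hkE : Even (i - q).val := by
      have h := hpar q (i - q).val
      rw [← hik] at h
      rcases Nat.even_or_odd (i - q).val with he' | ho
      · exact he'
      · exfalso
        have h1 : c i ∉ X := (hYX _).mp hi
        rw [← Nat.not_even_iff_odd] at ho
        tauto
    obtain ⟨t, ht⟩ := hkE
    have hlt : (i - q).val < m := ZMod.val_lt _
    refine ⟨t, by omega, ?_⟩
    have h2t : ((2 * t : ℕ) : ZMod m) = ((i - q).val : ZMod m) := by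
      congr 1; omega
    rw [h2t, ZMod.natCast_zmod_val]; ring
  have hrepL : ∀ i : ZMod m, c i ∈ Y → ∃ t : ℕ, t ≤ m' - 1 ∧ i = q - ((2 * t : ℕ) : ZMod m) := by
    intro i hi
    obtain ⟨t, ht1, ht2⟩ := hrepR i hi
    rcases Nat.eq_zero_or_pos t with h0 | hpos
    · refine ⟨0, by omega, ?_⟩
      rw [ht2, h0]; simp
    · refine ⟨m' - t, by omega, ?_⟩
      have h1 : ((2 * t : ℕ) : ZMod m) + ((2 * (m' - t) : ℕ) : ZMod m) = 0 := by
        rw [← Nat.cast_add, show 2 * t + 2 * (m' - t) = m by omega, ZMod.natCast_self]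
      rw [ht2]
      linear_combination h1
  -- minimal right and left distances to a non-T position
  obtain ⟨sb, hsb1, hsbm, hsbT⟩ :
      ∃ t : ℕ, 1 ≤ t ∧ t ≤ m' - 1 ∧ ¬ G.Adj x (c (q + ((2 * t : ℕ) : ZMod m))) := by
    obtain ⟨t, ht1, ht2⟩ := hrepR (p + 1) hp1Y
    have ht0 : t ≠ 0 := by
      rintro rfl
      rw [show ((2 * 0 : ℕ) : ZMod m) = 0 by simp, add_zero] at ht2
      rw [ht2] at hp1T
      exact hp1T hqT
    refine ⟨t, by omega, ht1, ?_⟩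
    rw [← ht2]; exact hp1T
  obtain ⟨sa, hsa1, hsam, hsaT⟩ :
      ∃ t : ℕ, 1 ≤ t ∧ t ≤ m' - 1 ∧ ¬ G.Adj x (c (q - ((2 * t : ℕ) : ZMod m))) := by
    obtain ⟨t, ht1, ht2⟩ := hrepL (p + 1) hp1Y
    have ht0 : t ≠ 0 := by
      rintro rfl
      rw [show ((2 * 0 : ℕ) : ZMod m) = 0 by simp, sub_zero] at ht2
      rw [ht2] at hp1T
      exact hp1T hqT
    refine ⟨t, by omega, ht1, ?_⟩
    rw [← ht2]; exact hp1T
  have hPb : ∃ k : ℕ, 1 ≤ k ∧ ¬ G.Adj x (c (q + ((2 * k : ℕ) : ZMod m))) := ⟨sb, hsb1, hsbT⟩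
  have hPa : ∃ k : ℕ, 1 ≤ k ∧ ¬ G.Adj x (c (q - ((2 * k : ℕ) : ZMod m))) := ⟨sa, hsa1, hsaT⟩
  obtain ⟨b, ⟨hb1, hbT⟩, hbmin, hble⟩ :
      ∃ b : ℕ, (1 ≤ b ∧ ¬ G.Adj x (c (q + ((2 * b : ℕ) : ZMod m)))) ∧
        (∀ k, k < b → ¬(1 ≤ k ∧ ¬ G.Adj x (c (q + ((2 * k : ℕ) : ZMod m))))) ∧ b ≤ sb :=
    ⟨Nat.find hPb, Nat.find_spec hPb, fun k hk => Nat.find_min hPb hk,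
      Nat.find_min' hPb ⟨hsb1, hsbT⟩⟩
  obtain ⟨a, ⟨ha1, haT⟩, hamin, hale⟩ :
      ∃ a : ℕ, (1 ≤ a ∧ ¬ G.Adj x (c (q - ((2 * a : ℕ) : ZMod m)))) ∧
        (∀ k, k < a → ¬(1 ≤ k ∧ ¬ G.Adj x (c (q - ((2 * k : ℕ) : ZMod m))))) ∧ a ≤ sa :=
    ⟨Nat.find hPa, Nat.find_spec hPa, fun k hk => Nat.find_min hPa hk,
      Nat.find_min' hPa ⟨hsa1, hsaT⟩⟩
  have hTright : ∀ k : ℕ, k < b → G.Adj x (c (q + ((2 * k : ℕ) : ZMod m))) := by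
    intro k hk
    rcases Nat.eq_zero_or_pos k with rfl | hpos
    · simpa using hqT
    · by_contra h
      exact hbmin k hk ⟨hpos, h⟩
  have hTleft : ∀ k : ℕ, k < a → G.Adj x (c (q - ((2 * k : ℕ) : ZMod m))) := by
    intro k hk
    rcases Nat.eq_zero_or_pos k with rfl | hpos
    · simpa using hqT
    · by_contra h
      exact hamin k hk ⟨hpos, h⟩
  have hblem : b ≤ m' - 1 := le_trans hble hsbm
  have halem : a ≤ m' - 1 := le_trans hale hsam
  -- the key bound
  have h2ab : 2 * (a + b) + 2 ≤ m := by
    by_contra hcon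
    have habm : m' ≤ a + b := by omega
    rcases eq_or_lt_of_le habm with heq | hlt
    · -- a + b = m' : there would be a unique non-T position in Y
      have huniq : ∀ i : ZMod m, c i ∈ Y → ¬ G.Adj x (c i) → i = q + ((2 * b : ℕ) : ZMod m) := by
        intro i hi hiT
        obtain ⟨t, ht1, ht2⟩ := hrepR i hi
        rcases lt_trichotomy t b with h | h | h
        · exfalso; rw [ht2] at hiT; exact hiT (hTright t h)
        · rw [ht2, h]
        · exfalso
          have hk : m' - t < a := by omega
          have hTl := hTleft (m' - t) hk
          rw [ht2] at hiT
          apply hiT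
          have heq2 : q + ((2 * t : ℕ) : ZMod m) = q - ((2 * (m' - t) : ℕ) : ZMod m) := by
            have h1 : ((2 * t : ℕ) : ZMod m) + ((2 * (m' - t) : ℕ) : ZMod m) = 0 := by
              rw [← Nat.cast_add, show 2 * t + 2 * (m' - t) = m by omega, ZMod.natCast_self]
            linear_combination h1
          rw [heq2]
          exact hTl
      have h1 := huniq (p + 1) hp1Y hp1T
      have h2 := huniq (p - 1) hpm1Y hpm1T
      have h3 : (p + 1 : ZMod m) = (p - 1 : ZMod m) := by rw [h1, ← h2]
      have h2eq : ((2 : ℕ) : ZMod m) = 0 := by push_cast; linear_combination h3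
      rw [ZMod.natCast_eq_zero_iff] at h2eq
      exact absurd (Nat.le_of_dvd (by norm_num) h2eq) (by omega)
    · -- a + b > m'
      have hk0 : m' - b < a := by omega
      have hTl := hTleft (m' - b) hk0
      apply hbT
      have heq2 : q + ((2 * b : ℕ) : ZMod m) = q - ((2 * (m' - b) : ℕ) : ZMod m) := by
        have h1 : ((2 * b : ℕ) : ZMod m) + ((2 * (m' - b) : ℕ) : ZMod m) = 0 := by
          rw [← Nat.cast_add, show 2 * b + 2 * (m' - b) = m by omega, ZMod.natCast_self]
        linear_combination h1
      rw [heq2]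
      exact hTl
  -- set up the new cycle of length n through x
  obtain ⟨n, hn⟩ : ∃ n : ℕ, n = 2 * (a + b) + 2 := ⟨_, rfl⟩
  have hn6 : 6 ≤ n := by omega
  haveI : NeZero n := ⟨by omega⟩
  obtain ⟨z, hz⟩ : ∃ z : ZMod m, z = q - ((2 * a : ℕ) : ZMod m) := ⟨_, rfl⟩
  have hzq : z + ((2 * a : ℕ) : ZMod m) = q := by rw [hz]; ring
  have hzY : c z ∈ Y := by
    rw [hYX]
    intro hzX
    have h := (hpar z (2 * a)).mpr (iff_of_true hzX ⟨a, by ring⟩)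
    rw [hzq] at h
    exact hqX h
  have hsideX : ∀ k : ℕ, (c (z + (k : ZMod m)) ∈ X ↔ Odd k) := by
    intro k
    rw [hpar z k, ← Nat.not_even_iff_odd]
    have hzX : c z ∉ X := (hYX _).mp hzY
    tauto
  have hsideY : ∀ k : ℕ, (c (z + (k : ZMod m)) ∈ Y ↔ Even k) := by
    intro k
    rw [hYX, hsideX, ← Nat.not_even_iff_odd]
    tauto
  -- T-values along the offsets
  have hToff : ∀ j : ℕ, 1 ≤ j → j ≤ a + b - 1 →
      G.Adj x (c (z + ((2 * j : ℕ) : ZMod m))) := by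
    intro j h1 h2
    rcases le_or_gt j a with hja | hja
    · have h3 : ((2 * (a - j) : ℕ) : ZMod m) + ((2 * j : ℕ) : ZMod m)
          = ((2 * a : ℕ) : ZMod m) := by
        rw [← Nat.cast_add]; congr 1; omega
      have heq : z + ((2 * j : ℕ) : ZMod m) = q - ((2 * (a - j) : ℕ) : ZMod m) := by
        rw [hz]; linear_combination h3
      rw [heq]
      exact hTleft (a - j) (by omega)
    · have h3 : ((2 * (j - a) : ℕ) : ZMod m) + ((2 * a : ℕ) : ZMod m)
          = ((2 * j : ℕ) : ZMod m) := by
        rw [← Nat.cast_add]; congr 1; omega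
      have heq : z + ((2 * j : ℕ) : ZMod m) = q + ((2 * (j - a) : ℕ) : ZMod m) := by
        rw [hz]; linear_combination -h3
      rw [heq]
      exact hTright (j - a) (by omega)
  have hT0 : ¬ G.Adj x (c z) := by rw [hz]; exact haT
  have hTend : ¬ G.Adj x (c (z + ((2 * (a + b) : ℕ) : ZMod m))) := by
    have heq : z + ((2 * (a + b) : ℕ) : ZMod m) = q + ((2 * b : ℕ) : ZMod m) := by
      rw [hz]
      have h3 : ((2 * (a + b) : ℕ) : ZMod m)
          = ((2 * a : ℕ) : ZMod m) + ((2 * b : ℕ) : ZMod m) := by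
        rw [← Nat.cast_add]; congr 1; omega
      rw [h3]; ring
    rw [heq]
    exact hbT
  -- no X-offset vertex is adjacent to y
  have hNS : ∀ j : ℕ, j ≤ a + b - 1 → ¬ G.Adj (c (z + ((2 * j + 1 : ℕ) : ZMod m))) y := by
    intro j hj
    rcases Nat.eq_zero_or_pos j with rfl | hpos
    · have hT2 := hToff 1 le_rfl (by omega)
      have hY2 : c (z + ((2 * 1 : ℕ) : ZMod m)) ∈ Y := (hsideY (2 * 1)).mpr ⟨1, by ring⟩
      have h := (hconsT _ hY2 hT2).2
      have heq : (z + ((2 * 1 : ℕ) : ZMod m)) - 1 = z + ((2 * 0 + 1 : ℕ) : ZMod m) := by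
        push_cast; ring
      rw [heq] at h
      exact h
    · have hTj := hToff j hpos hj
      have hYj : c (z + ((2 * j : ℕ) : ZMod m)) ∈ Y := (hsideY (2 * j)).mpr ⟨j, by ring⟩
      have h := (hconsT _ hYj hTj).1
      have heq : (z + ((2 * j : ℕ) : ZMod m)) + 1 = z + ((2 * j + 1 : ℕ) : ZMod m) := by
        push_cast; ring
      rw [heq] at h
      exact h
  -- machinery for ZMod n
  haveI : Fact (1 < n) := ⟨by omega⟩
  have hvlt : ∀ i : ZMod n, i.val < n := fun i => ZMod.val_lt i
  have hvalinj : ∀ i j : ZMod n, i.val = j.val → i = j := by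
    intro i j h
    have h1 : ((i.val : ℕ) : ZMod n) = ((j.val : ℕ) : ZMod n) := by rw [h]
    rwa [ZMod.natCast_zmod_val, ZMod.natCast_zmod_val] at h1
  have hsucc : ∀ i : ZMod n, (i.val = n - 1 ∧ i + 1 = 0) ∨ ((i + 1).val = i.val + 1) := by
    intro i
    rcases eq_or_ne i.val (n - 1) with h | h
    · left
      refine ⟨h, ?_⟩
      have h1 : i = ((n - 1 : ℕ) : ZMod n) := by rw [← h, ZMod.natCast_zmod_val]
      have h2 : ((n - 1 : ℕ) : ZMod n) + 1 = 0 := by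
        have h3 : ((n - 1 : ℕ) : ZMod n) + ((1 : ℕ) : ZMod n) = ((n : ℕ) : ZMod n) := by
          rw [← Nat.cast_add]; congr 1; omega
        rw [Nat.cast_one] at h3
        rw [h3, ZMod.natCast_self]
      rw [h1]; exact h2
    · right
      have h2 : i + 1 = ((i.val + 1 : ℕ) : ZMod n) := by
        rw [Nat.cast_add, Nat.cast_one, ZMod.natCast_zmod_val]
      rw [h2, ZMod.val_natCast_of_lt (by have := hvlt i; omega)]
  have hsuccn : ∀ i j : ZMod n, j = i + 1 ↔
      (j.val = i.val + 1 ∨ (i.val = n - 1 ∧ j.val = 0)) := by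
    intro i j
    constructor
    · rintro rfl
      rcases hsucc i with ⟨h1, h2⟩ | h
      · right; rw [h2]; exact ⟨h1, ZMod.val_zero⟩
      · left; exact h
    · rintro (h | ⟨h1, h2⟩)
      · apply hvalinj
        rcases hsucc i with ⟨h3, h4⟩ | h3
        · have := hvlt j; omega
        · rw [h3]; exact h
      · apply hvalinj
        rcases hsucc i with ⟨h3, h4⟩ | h3
        · rw [h4, ZMod.val_zero, h2]
        · have h5 := hvlt (i + 1); omega
  have hcastinj : ∀ s t : ℕ, s < m → t < m → (s : ZMod m) = (t : ZMod m) → s = t := by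
    intro s t hs ht hst
    have h := (ZMod.natCast_eq_natCast_iff' s t m).mp hst
    rwa [Nat.mod_eq_of_lt hs, Nat.mod_eq_of_lt ht] at h
  obtain ⟨f, hf0, hfval⟩ :
      ∃ f : ZMod n → V, f 0 = x ∧
        ∀ i : ZMod n, i ≠ 0 → f i = c (z + ((i.val - 1 : ℕ) : ZMod m)) :=
    ⟨fun i => if i = 0 then x else c (z + ((i.val - 1 : ℕ) : ZMod m)),
      by simp, fun i hi => by simp [hi]⟩
  have hvne : ∀ i : ZMod n, i ≠ 0 → i.val ≠ 0 := fun i hi h => hi ((ZMod.val_eq_zero i).mp h)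
  -- edges of the new cycle
  have hfadj : ∀ i : ZMod n, (bipCompl G X Y).Adj (f i) (f (i + 1)) := by
    intro i
    rcases eq_or_ne i 0 with rfl | hi0
    · rw [zero_add, hf0, hfval 1 one_ne_zero, ZMod.val_one]
      rw [show ((1 - 1 : ℕ) : ZMod m) = 0 from by norm_num, add_zero]
      exact (hBXY G x hx _ hzY).mpr hT0
    · rcases hsucc i with ⟨h1, h2⟩ | h1
      · rw [h2, hf0, hfval i hi0]
        have heq : ((i.val - 1 : ℕ) : ZMod m) = ((2 * (a + b) : ℕ) : ZMod m) := by
          congr 1; omega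
        rw [heq]
        exact ((hBXY G x hx _ ((hsideY (2 * (a + b))).mpr ⟨a + b, by ring⟩)).mpr hTend).symm
      · have hi1 : i + 1 ≠ 0 := by
          intro h
          rw [h, ZMod.val_zero] at h1
          omega
        rw [hfval i hi0, hfval _ hi1, h1]
        have hiv := hvne i hi0
        have heq : z + ((i.val + 1 - 1 : ℕ) : ZMod m)
            = (z + ((i.val - 1 : ℕ) : ZMod m)) + 1 := by
          rw [show (i.val + 1 - 1 : ℕ) = (i.val - 1) + 1 from by omega,
            Nat.cast_add, Nat.cast_one]
          ring
        rw [heq]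
        exact hBsub _ _ (hcadj _)
  -- no odd-offset vertex is adjacent to y
  have hNS' : ∀ w : ℕ, Odd w → w ≤ 2 * (a + b) → ¬ G.Adj (c (z + (w : ZMod m))) y := by
    intro w how hw
    obtain ⟨w', hw'⟩ := how
    have h := hNS w' (by omega)
    rwa [show (2 * w' + 1 : ℕ) = w from by omega] at h
  -- injectivity of the new cycle
  have hfinj : Function.Injective f := by
    have key : ∀ i : ZMod n, i ≠ 0 → f i ≠ x := by
      intro i hi0 hfi
      rw [hfval i hi0] at hfi
      rcases Nat.even_or_odd (i.val - 1) with hev | hod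
      · exact hnotY x hx (hfi ▸ (hsideY _).mpr hev)
      · apply hNS' (i.val - 1) hod (by have := hvlt i; omega)
        rw [hfi]
        exact he
    intro i j hij
    rcases eq_or_ne i 0 with rfl | hi0 <;> rcases eq_or_ne j 0 with rfl | hj0
    · rfl
    · exact absurd (by rw [← hij, hf0] : f j = x) (key j hj0)
    · exact absurd (by rw [hij, hf0] : f i = x) (key i hi0)
    · rw [hfval i hi0, hfval j hj0] at hij
      have h1 := add_left_cancel (hcinj hij)
      have h3 : i.val - 1 = j.val - 1 :=
        hcastinj _ _ (by have := hvlt i; omega) (by have := hvlt j; omega) h1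
      have hiv := hvne i hi0
      have hjv := hvne j hj0
      exact hvalinj i j (by omega)
  -- chord helpers
  have key0 : ∀ w : ℕ, w ≤ 2 * (a + b) → w ≠ 0 → w ≠ 2 * (a + b) →
      ¬ (bipCompl G X Y).Adj x (c (z + (w : ZMod m))) := by
    intro w hw1 hw2 hw3 hBadj
    rcases Nat.even_or_odd w with hev | hod
    · obtain ⟨w', hw'⟩ := hev
      have hT := hToff w' (by omega) (by omega)
      rw [show (2 * w' : ℕ) = w from by omega] at hT
      exact hBnG _ _ hBadj hT
    · exact hBXX x hx _ ((hsideX w).mpr hod) hBadj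
  have key1 : ∀ w v : ℕ, Odd w → Even v → w ≤ 2 * (a + b) → v ≤ 2 * (a + b) →
      v ≠ w + 1 → w ≠ v + 1 →
      ¬ (bipCompl G X Y).Adj (c (z + (w : ZMod m))) (c (z + (v : ZMod m))) := by
    intro w v how hev hw hv hv1 hw1 hBadj
    have hXw : c (z + (w : ZMod m)) ∈ X := (hsideX w).mpr how
    have hYv : c (z + (v : ZMod m)) ∈ Y := (hsideY v).mpr hev
    have hnc1 : z + (v : ZMod m) ≠ (z + (w : ZMod m)) + 1 := by
      intro h
      have h2 : ((v : ℕ) : ZMod m) = ((w + 1 : ℕ) : ZMod m) := by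
        push_cast
        linear_combination h
      exact hv1 (hcastinj _ _ (by omega) (by omega) h2)
    have hnc2 : z + (w : ZMod m) ≠ (z + (v : ZMod m)) + 1 := by
      intro h
      have h2 : ((w : ℕ) : ZMod m) = ((v + 1 : ℕ) : ZMod m) := by
        push_cast
        linear_combination h
      exact hw1 (hcastinj _ _ (by omega) (by omega) h2)
    have hST := hnonc _ _ hXw hYv hnc1 hnc2 (hBnG _ _ hBadj)
    exact hNS' w how hw hST.1
  -- the new cycle is induced
  have hfchord : ∀ i j : ZMod n, (bipCompl G X Y).Adj (f i) (f j) →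
      j = i + 1 ∨ i = j + 1 := by
    intro i j hadj
    by_contra hcon
    push_neg at hcon
    obtain ⟨hne1', hne2'⟩ := hcon
    have hne1a : j.val ≠ i.val + 1 := fun h => hne1' ((hsuccn i j).mpr (Or.inl h))
    have hne1b : i.val = n - 1 → j.val ≠ 0 :=
      fun h1 h2 => hne1' ((hsuccn i j).mpr (Or.inr ⟨h1, h2⟩))
    have hne2a : i.val ≠ j.val + 1 := fun h => hne2' ((hsuccn j i).mpr (Or.inl h))
    have hne2b : j.val = n - 1 → i.val ≠ 0 :=
      fun h1 h2 => hne2' ((hsuccn j i).mpr (Or.inr ⟨h1, h2⟩))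
    have hij : i ≠ j := by rintro rfl; exact (bipCompl G X Y).irrefl hadj
    rcases eq_or_ne i 0 with rfl | hi0
    · have hj0 : j ≠ 0 := Ne.symm hij
      rw [hf0, hfval j hj0] at hadj
      have hjv := hvne j hj0
      have hjlt := hvlt j
      refine key0 (j.val - 1) (by omega) ?_ ?_ hadj
      · intro h
        rw [ZMod.val_zero] at hne1a
        omega
      · intro h
        exact hne2b (by omega) ZMod.val_zero
    rcases eq_or_ne j 0 with rfl | hj0
    · rw [hf0, hfval i hi0] at hadj
      have hiv := hvne i hi0
      have hilt := hvlt i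
      refine key0 (i.val - 1) (by omega) ?_ ?_ hadj.symm
      · intro h
        rw [ZMod.val_zero] at hne2a
        omega
      · intro h
        exact hne1b (by omega) ZMod.val_zero
    · rw [hfval i hi0, hfval j hj0] at hadj
      have hiv := hvne i hi0
      have hjv := hvne j hj0
      have hilt := hvlt i
      have hjlt := hvlt j
      rcases Nat.even_or_odd (i.val - 1) with hev | hod <;>
        rcases Nat.even_or_odd (j.val - 1) with hev2 | hod2
      · exact hBYY _ ((hsideY _).mpr hev) _ ((hsideY _).mpr hev2) hadj
      · exact key1 (j.val - 1) (i.val - 1) hod2 hev (by omega) (by omega)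
          (by omega) (by omega) hadj.symm
      · exact key1 (i.val - 1) (j.val - 1) hod hev2 (by omega) (by omega)
          (by omega) (by omega) hadj
      · exact hBXX _ ((hsideX _).mpr hod) _ ((hsideX _).mpr hod2) hadj
  exact hbc n f hn6 ⟨⟨hfinj, hfadj⟩, hfchord⟩
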